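/- For positive reals a ≠ b with 0 < |b−a| < 1, and for every positive integer k, the double inequality ((k−1)!/2)[(1/(b−a)+1)/a^k + (1−1/(b−a))/b^k] < (−1)^{k−1}(ψ^{(k−1)}(b) − ψ^{(k−1)}(a))/(b−a) < ((k−1)!/2)[(1/(b−a)+1/|b−a|)/a^k + (1/|b−a|−1/(b−a))/b^k] holds (i.e., the bounds with β = 1 and γ = 1/|b−a|). -/

import Mathlib

open Filter Topology Finset Set



lemma summable_aux {c : ℝ} (hc : 0 < c) {m : ℕ} (hm : 2 ≤ m) :
    Summable (fun n : ℕ => ((c + n) ^ m)⁻¹) := by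
  have h1 : Summable (fun n : ℕ => 1 / ((n : ℝ)) ^ m) :=
    Real.summable_one_div_nat_pow.mpr (by omega)
  have h2 : Summable (fun n : ℕ => 1 / ((n : ℝ) + 1) ^ m) := by
    have := (summable_nat_add_iff (f := fun n : ℕ => 1 / ((n : ℝ)) ^ m) 1).mpr h1
    refine this.congr fun n => by push_cast; ring
  rw [← summable_nat_add_iff 1]
  refine Summable.of_nonneg_of_le (fun n => by positivity) (fun n => ?_) h2
  rw [one_div]
  refine inv_anti₀ (by positivity) ?_
  refine pow_le_pow_left₀ (by positivity) ?_ m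
  push_cast; linarith

lemma trapezoid {x y : ℝ} (hx : 0 < x) (hxy : x < y) {k : ℕ} (hk : 1 ≤ k) :
    (x ^ k)⁻¹ - (y ^ k)⁻¹ < (k : ℝ) * (y - x) / 2 * ((x ^ (k + 1))⁻¹ + (y ^ (k + 1))⁻¹) := by
  have hy : 0 < y := hx.trans hxy
  have hxk : (0:ℝ) < x ^ (k+1) := by positivity
  have hyk : (0:ℝ) < y ^ (k+1) := by positivity
  have hxk0 : (0:ℝ) < x ^ k := by positivity
  have hyk0 : (0:ℝ) < y ^ k := by positivity
  have key : ∑ i ∈ range k, (x ^ (i+1) * y ^ (k-i) + x ^ (k-i) * y ^ (i+1)) <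
      ∑ i ∈ range k, (x ^ (k+1) + y ^ (k+1)) := by
    refine Finset.sum_lt_sum_of_nonempty (by simp; omega) ?_
    intro i hi
    have hik : i < k := Finset.mem_range.mp hi
    have hpq : (i + 1) + (k - i) = k + 1 := by omega
    have h1 : x ^ (i+1) < y ^ (i+1) := pow_lt_pow_left₀ hxy hx.le (by omega)
    have h2 : x ^ (k-i) < y ^ (k-i) := pow_lt_pow_left₀ hxy hx.le (by omega)
    have expand : x ^ (k+1) + y ^ (k+1) - (x ^ (i+1) * y ^ (k-i) + x ^ (k-i) * y ^ (i+1))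
        = (y ^ (i+1) - x ^ (i+1)) * (y ^ (k-i) - x ^ (k-i)) := by
      rw [← hpq, pow_add, pow_add]; ring
    nlinarith [mul_pos (sub_pos.mpr h1) (sub_pos.mpr h2)]
  -- rewrite key as : 2*x*y*(geom sum) < k*(x^(k+1)+y^(k+1))
  have reflect : ∑ i ∈ range k, x ^ (k-i) * y ^ (i+1)
      = ∑ i ∈ range k, x ^ (i+1) * y ^ (k-i) := by
    rw [← Finset.sum_range_reflect]
    refine Finset.sum_congr rfl fun i hi => ?_
    have hik : i < k := Finset.mem_range.mp hi
    have e1 : k - (k - 1 - i) = i + 1 := by omega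
    have e2 : k - 1 - i + 1 = k - i := by omega
    rw [e1, e2, mul_comm]
  have sum_const : ∑ i ∈ range k, (x ^ (k+1) + y ^ (k+1)) = (k:ℝ) * (x^(k+1) + y^(k+1)) := by
    rw [Finset.sum_const, card_range, nsmul_eq_mul]
  have key2 : 2 * ∑ i ∈ range k, x ^ (i+1) * y ^ (k-i) < (k:ℝ) * (x^(k+1) + y^(k+1)) := by
    rw [← sum_const]
    calc 2 * ∑ i ∈ range k, x ^ (i+1) * y ^ (k-i)
        = ∑ i ∈ range k, (x ^ (i+1) * y ^ (k-i) + x ^ (k-i) * y ^ (i+1)) := by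
          rw [Finset.sum_add_distrib, reflect]; ring
      _ < _ := key
  -- now express LHS of goal
  have geom : y ^ k - x ^ k = (y - x) * ∑ i ∈ range k, y ^ i * x ^ (k - 1 - i) := by
    have h := geom_sum₂_mul (R := ℝ) y x k
    nlinarith [h]
  have sum_eq : x * y * ∑ i ∈ range k, y ^ i * x ^ (k - 1 - i)
      = ∑ i ∈ range k, x ^ (k-i) * y ^ (i+1) := by
    rw [Finset.mul_sum]
    refine Finset.sum_congr rfl fun i hi => ?_
    have hik : i < k := Finset.mem_range.mp hi
    have : (k - 1 - i) + 1 = k - i := by omega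
    rw [← this, pow_succ, pow_succ']
    ring
  have lhs_eq : (x ^ k)⁻¹ - (y ^ k)⁻¹ = (y ^ k - x ^ k) / (x ^ k * y ^ k) := by
    field_simp
  rw [lhs_eq, div_lt_iff₀ (by positivity)] at *
  have exp1 : x ^ (k+1) * (x ^ k * y ^ k) = x ^ k * x ^ k * (x * y ^ k) := by ring_nf
  -- final : (y^k - x^k) < (k*(y-x)/2 * ((x^(k+1))⁻¹+(y^(k+1))⁻¹)) * (x^k*y^k)
  have rhs_eq : (k : ℝ) * (y - x) / 2 * ((x ^ (k + 1))⁻¹ + (y ^ (k + 1))⁻¹) * (x ^ k * y ^ k)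
      = (k : ℝ) * (y - x) * (x^(k+1) + y^(k+1)) / (2 * x * y) := by
    rw [pow_succ, pow_succ]
    field_simp
    ring
  rw [rhs_eq, lt_div_iff₀ (by positivity)]
  calc (y ^ k - x ^ k) * (2 * x * y) = 2 * (x * y * ((y-x) * ∑ i ∈ range k, y ^ i * x ^ (k - 1 - i))) := by
        rw [← geom]; ring
    _ = (y - x) * (2 * ∑ i ∈ range k, x ^ (k-i) * y ^ (i+1)) := by
        rw [← sum_eq]; ring
    _ < (y - x) * ((k:ℝ) * (x^(k+1) + y^(k+1))) := by
        refine mul_lt_mul_of_pos_left ?_ (by linarith)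
        rw [reflect]; exact key2
    _ = (k:ℝ) * (y - x) * (x^(k+1) + y^(k+1)) := by ring




lemma hasDerivAt_inv_pow_aux {w : ℝ} {k : ℕ} (hk : 1 ≤ k) {u : ℝ → ℝ} {s : ℝ}
    (hu : HasDerivAt u w s) (huz : 0 < u s) :
    HasDerivAt (fun x => (u x ^ k)⁻¹) (-((k:ℝ) * w * ((u s) ^ (k+1))⁻¹)) s := by
  have h := (hu.pow k).inv (by exact pow_ne_zero _ huz.ne')
  refine h.congr_deriv ?_
  simp only [Pi.pow_apply]
  set z := u s with hz
  have hzpos : (0:ℝ) < z := huz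
  have hsplit : (z ^ k) ^ 2 = z ^ (k-1) * z ^ (k+1) := by
    rw [← pow_mul, ← pow_add]
    congr 1
    omega
  rw [hsplit, neg_div]
  rw [show (k:ℝ) * z ^ (k-1) * w = z ^ (k-1) * ((k:ℝ) * w) by ring]
  rw [mul_div_mul_left _ _ (by positivity : z ^ (k-1) ≠ 0)]
  rw [div_eq_mul_inv]

lemma ratio_strictMono {c : ℝ} {k : ℕ} (hk : 1 ≤ k) (hc : 0 < c) :
    StrictMonoOn (fun s : ℝ => ((((c - s) ^ k)⁻¹ - (((c + s)) ^ k)⁻¹) / s)) (Ioo 0 c) := by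
  have hD : ∀ s ∈ Ioo (0:ℝ) c, HasDerivAt
      (fun s : ℝ => (((c - s) ^ k)⁻¹ - ((c + s) ^ k)⁻¹) / s)
      ((((k:ℝ) * ((c - s) ^ (k+1))⁻¹ + (k:ℝ) * ((c + s) ^ (k+1))⁻¹) * s
        - (((c - s) ^ k)⁻¹ - ((c + s) ^ k)⁻¹)) / s ^ 2) s := by
    intro s hs
    obtain ⟨hs0, hsc⟩ := hs
    have hcs : 0 < c - s := by linarith
    have hcs' : 0 < c + s := by linarith
    have hb1 : HasDerivAt (fun x : ℝ => c - x) (-1) s := by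
      simpa using (hasDerivAt_id s).const_sub c
    have hb2 : HasDerivAt (fun x : ℝ => c + x) 1 s := by
      simpa using (hasDerivAt_id s).const_add c
    have h1 : HasDerivAt (fun x : ℝ => ((c - x) ^ k)⁻¹) ((k:ℝ) * ((c - s) ^ (k+1))⁻¹) s := by
      have := hasDerivAt_inv_pow_aux hk hb1 (by simpa using hcs)
      simpa using this
    have h2 : HasDerivAt (fun x : ℝ => ((c + x) ^ k)⁻¹) (-((k:ℝ) * ((c + s) ^ (k+1))⁻¹)) s := by
      have := hasDerivAt_inv_pow_aux hk hb2 (by simpa using hcs')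
      simpa using this
    have hsub := h1.sub h2
    rw [sub_neg_eq_add] at hsub
    have hdiv := hsub.div (hasDerivAt_id s) (ne_of_gt hs0)
    exact hdiv.congr_deriv (by simp)
  refine strictMonoOn_of_deriv_pos (convex_Ioo 0 c) ?_ ?_
  · intro s hs
    exact (hD s hs).continuousAt.continuousWithinAt
  · intro s hs
    rw [interior_Ioo] at hs
    rw [(hD s hs).deriv]
    obtain ⟨hs0, hsc⟩ := hs
    have hcs : 0 < c - s := by linarith
    have htrap := trapezoid hcs (by linarith : c - s < c + s) hk
    have hlt : ((c - s) ^ k)⁻¹ - ((c + s) ^ k)⁻¹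
        < ((k:ℝ) * ((c - s) ^ (k+1))⁻¹ + (k:ℝ) * ((c + s) ^ (k+1))⁻¹) * s := by
      have he : (c + s) - (c - s) = 2 * s := by ring
      rw [he] at htrap
      calc ((c - s) ^ k)⁻¹ - ((c + s) ^ k)⁻¹
          < (k:ℝ) * (2*s) / 2 * (((c-s) ^ (k + 1))⁻¹ + ((c+s) ^ (k + 1))⁻¹) := htrap
        _ = ((k:ℝ) * ((c - s) ^ (k+1))⁻¹ + (k:ℝ) * ((c + s) ^ (k+1))⁻¹) * s := by ring
    have hnum : 0 < (((k:ℝ) * ((c - s) ^ (k+1))⁻¹ + (k:ℝ) * ((c + s) ^ (k+1))⁻¹) * s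
        - (((c - s) ^ k)⁻¹ - ((c + s) ^ k)⁻¹)) := by linarith
    positivity

/-- The key per-term convexity inequality. -/
lemma keyC {α t : ℝ} (hα : 0 < α) (ht0 : 0 < t) (ht1 : t < 1) {k : ℕ} (hk : 1 ≤ k) :
    (1 + t) * ((α + t) ^ k)⁻¹ + (1 - t) * ((α + 1 + t) ^ k)⁻¹
      < (1 - t) * (α ^ k)⁻¹ + (1 + t) * ((α + 1) ^ k)⁻¹ := by
  set c := α + (1 + t) / 2 with hc
  set r := (1 - t) / 2 with hr
  set h := (1 + t) / 2 with hh
  have hc0 : 0 < c := by positivity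
  have hrIoo : r ∈ Ioo (0:ℝ) c := ⟨by rw [hr]; linarith, by rw [hr, hc]; linarith⟩
  have hhIoo : h ∈ Ioo (0:ℝ) c := ⟨by rw [hh]; linarith, by rw [hh, hc]; linarith⟩
  have hrh : r < h := by rw [hr, hh]; linarith
  have key := ratio_strictMono hk hc0 hrIoo hhIoo hrh
  simp only at key
  have e1 : c - r = α + t := by rw [hc, hr]; ring
  have e2 : c + r = α + 1 := by rw [hc, hr]; ring
  have e3 : c - h = α := by rw [hc, hh]; ring
  have e4 : c + h = α + 1 + t := by rw [hc, hh]; ring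
  rw [e1, e2, e3, e4] at key
  rw [div_lt_div_iff₀ (by rw [hr]; linarith) (by rw [hh]; linarith)] at key
  rw [hr, hh] at key
  nlinarith [key]




lemma tendsto_inv_pow_zero {c : ℝ} (hc : 0 < c) {k : ℕ} (hk : 1 ≤ k) :
    Tendsto (fun n : ℕ => ((c + n) ^ k)⁻¹) atTop (𝓝 0) := by
  have h1 : Tendsto (fun n : ℕ => c + (n:ℝ)) atTop atTop :=
    tendsto_atTop_add_const_left _ c tendsto_natCast_atTop_atTop
  have h2 : Tendsto (fun n : ℕ => (c + (n:ℝ)) ^ k) atTop atTop :=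
    (tendsto_pow_atTop (by omega : k ≠ 0)).comp h1
  exact h2.inv_tendsto_atTop

lemma tele {c : ℝ} (hc : 0 < c) {k : ℕ} (hk : 1 ≤ k) :
    HasSum (fun n : ℕ => ((c + n) ^ k)⁻¹ - ((c + n + 1) ^ k)⁻¹) ((c ^ k)⁻¹) := by
  have hmono : ∀ n : ℕ, (0:ℝ) ≤ ((c + n) ^ k)⁻¹ - ((c + n + 1) ^ k)⁻¹ := by
    intro n
    have h1 : (0:ℝ) < c + n := by positivity
    have : ((c + n + 1) ^ k)⁻¹ ≤ ((c + n) ^ k)⁻¹ := by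
      apply inv_anti₀ (by positivity)
      apply pow_le_pow_left₀ (by positivity)
      linarith
      
    linarith
  rw [hasSum_iff_tendsto_nat_of_nonneg hmono]
  have heq : ∀ N : ℕ, ∑ n ∈ range N, (((c + n) ^ k)⁻¹ - ((c + n + 1) ^ k)⁻¹)
      = ((c + (0:ℕ)) ^ k)⁻¹ - ((c + N) ^ k)⁻¹ := by
    intro N
    have := Finset.sum_range_sub' (f := fun n : ℕ => ((c + n) ^ k)⁻¹) N
    rw [← this]
    refine Finset.sum_congr rfl fun n _ => ?_
    push_cast
    ring_nf
  have : Tendsto (fun N : ℕ => ((c + (0:ℕ)) ^ k)⁻¹ - ((c + N) ^ k)⁻¹) atTop (𝓝 ((c ^ k)⁻¹)) := by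
    have h0 : ((c + ((0:ℕ):ℝ)) ^ k)⁻¹ = (c ^ k)⁻¹ := by norm_num
    rw [h0]
    simpa using (tendsto_const_nhds (x := (c ^ k)⁻¹)).sub (tendsto_inv_pow_zero hc hk)
  exact Tendsto.congr (fun N => (heq N).symm) this

lemma sum_bounds {a b : ℝ} (ha : 0 < a) (hab : a < b) (h1 : b - a < 1) {k : ℕ} (hk : 1 ≤ k) :
    ((1 + (b - a)) * (a ^ k)⁻¹ + ((b - a) - 1) * (b ^ k)⁻¹) / 2
        < ∑' n : ℕ, (((a + n) ^ k)⁻¹ - ((b + n) ^ k)⁻¹)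
      ∧ ∑' n : ℕ, (((a + n) ^ k)⁻¹ - ((b + n) ^ k)⁻¹) < (a ^ k)⁻¹ := by
  have hb : 0 < b := ha.trans hab
  set t := b - a with htdef
  have ht0 : 0 < t := by rw [htdef]; linarith
  have ht1 : t < 1 := h1
  set g := fun n : ℕ => ((a + n) ^ k)⁻¹ - ((b + n) ^ k)⁻¹ with hg
  set Da := fun n : ℕ => ((a + n) ^ k)⁻¹ - ((a + n + 1) ^ k)⁻¹ with hDa
  set Db := fun n : ℕ => ((b + n) ^ k)⁻¹ - ((b + n + 1) ^ k)⁻¹ with hDb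
  have hsDa : HasSum Da ((a ^ k)⁻¹) := tele ha hk
  have hsDb : HasSum Db ((b ^ k)⁻¹) := tele hb hk
  have hgD : ∀ n : ℕ, g n < Da n := by
    intro n
    have hbn : b + n < a + n + 1 := by linarith
    have : ((a + n + 1) ^ k)⁻¹ < ((b + n) ^ k)⁻¹ := by
      apply inv_strictAnti₀ (by positivity)
      exact pow_lt_pow_left₀ hbn (by positivity) (by omega)
    simp only [hg, hDa]
    linarith
  have hgnonneg : ∀ n : ℕ, 0 ≤ g n := by
    intro n
    have : ((b + n) ^ k)⁻¹ ≤ ((a + n) ^ k)⁻¹ := by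
      apply inv_anti₀ (by positivity)
      apply pow_le_pow_left₀ (by positivity)
      linarith
    simp only [hg]; linarith
  have hSg : Summable g :=
    Summable.of_nonneg_of_le hgnonneg (fun n => (hgD n).le) hsDa.summable
  constructor
  · -- lower bound
    set d := fun n : ℕ => ((1 + t)/2) * Da n + ((t - 1)/2) * Db n with hd
    have hsd : HasSum d (((1 + t)/2) * (a ^ k)⁻¹ + ((t - 1)/2) * (b ^ k)⁻¹) :=
      (hsDa.mul_left _).add (hsDb.mul_left _)
    have hdg : ∀ n : ℕ, d n < g n := by
      intro n
      have hαn : (0:ℝ) < a + n := by positivity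
      have hkey := keyC hαn ht0 ht1 hk
      have e1 : a + (n:ℝ) + t = b + n := by rw [htdef]; ring
      have e2 : a + (n:ℝ) + 1 + t = b + n + 1 := by rw [htdef]; ring
      rw [e1, e2] at hkey
      simp only [hd, hDa, hDb, hg]
      nlinarith [hkey]
    have := Summable.tsum_lt_tsum (f := d) (g := g) (fun n => (hdg n).le) (hdg 0) hsd.summable hSg
    calc ((1 + t) * (a ^ k)⁻¹ + (t - 1) * (b ^ k)⁻¹) / 2
        = ((1 + t)/2) * (a ^ k)⁻¹ + ((t - 1)/2) * (b ^ k)⁻¹ := by ring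
      _ = ∑' n, d n := hsd.tsum_eq.symm
      _ < ∑' n, g n := this
  · -- upper bound
    have := Summable.tsum_lt_tsum (f := g) (g := Da) (fun n => (hgD n).le) (hgD 0) hSg hsDa.summable
    calc ∑' n, g n < ∑' n, Da n := this
      _ = (a ^ k)⁻¹ := hsDa.tsum_eq




noncomputable def psi : ℝ → ℝ := deriv (fun x => Real.log (Real.Gamma x))

noncomputable def Lseq (n : ℕ) : ℝ := Real.log ((n:ℝ) + 2) - Real.log ((n:ℝ) + 1)

noncomputable def fser (n : ℕ) (x : ℝ) : ℝ :=
  x * Lseq n - Real.log (x + n + 1) + Real.log ((n:ℝ) + 1)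

noncomputable def Tser (x : ℝ) : ℝ := ∑' n, fser n x

noncomputable def Tder (x : ℝ) : ℝ := ∑' n : ℕ, (Lseq n - (x + n + 1)⁻¹)

/-- basic log bounds -/
lemma log_one_add_le {u : ℝ} (hu : 0 ≤ u) : Real.log (1 + u) ≤ u := by
  have := Real.log_le_sub_one_of_pos (show (0:ℝ) < 1 + u by linarith)
  linarith

lemma le_log_one_add {u : ℝ} (hu : 0 ≤ u) : u / (1 + u) ≤ Real.log (1 + u) := by
  have h1 : (0:ℝ) < 1 + u := by linarith
  have h2 := Real.log_le_sub_one_of_pos (show (0:ℝ) < (1 + u)⁻¹ by positivity)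
  rw [Real.log_inv] at h2
  have : (1 + u)⁻¹ - 1 = -(u / (1 + u)) := by field_simp; ring
  rw [this] at h2
  linarith

/-- log difference as log(1 + ·) : for `0 < d`, `0 < z`:
`log (z + d) - log z = log (1 + d/z)` -/
lemma log_diff_eq {z d : ℝ} (hz : 0 < z) (hd : 0 ≤ d) :
    Real.log (z + d) - Real.log z = Real.log (1 + d / z) := by
  rw [← Real.log_div (by linarith) (ne_of_gt hz)]
  congr 1
  field_simp

lemma log_diff_le {z d : ℝ} (hz : 0 < z) (hd : 0 ≤ d) :
    Real.log (z + d) - Real.log z ≤ d / z := by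
  rw [log_diff_eq hz hd]
  exact log_one_add_le (by positivity)

lemma le_log_diff {z d : ℝ} (hz : 0 < z) (hd : 0 ≤ d) :
    d / (z + d) ≤ Real.log (z + d) - Real.log z := by
  rw [log_diff_eq hz hd]
  have := le_log_one_add (show (0:ℝ) ≤ d / z by positivity)
  have he : d / z / (1 + d / z) = d / (z + d) := by
    rw [div_div]
    congr 1
    field_simp
  rw [he] at this
  exact this

lemma Lseq_le (n : ℕ) : Lseq n ≤ ((n:ℝ) + 1)⁻¹ := by
  have h : Lseq n = Real.log (((n:ℝ)+1) + 1) - Real.log ((n:ℝ)+1) := by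
    unfold Lseq; ring_nf
  rw [h]
  calc Real.log (((n:ℝ)+1) + 1) - Real.log ((n:ℝ)+1) ≤ 1 / ((n:ℝ)+1) :=
        log_diff_le (by positivity) zero_le_one
    _ = ((n:ℝ)+1)⁻¹ := one_div _

lemma le_Lseq (n : ℕ) : ((n:ℝ) + 2)⁻¹ ≤ Lseq n := by
  have h : Lseq n = Real.log (((n:ℝ)+1) + 1) - Real.log ((n:ℝ)+1) := by
    unfold Lseq; ring_nf
  rw [h]
  calc ((n:ℝ)+2)⁻¹ = 1 / (((n:ℝ)+1) + 1) := by rw [one_div]; ring_nf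
    _ ≤ Real.log (((n:ℝ)+1) + 1) - Real.log ((n:ℝ)+1) := le_log_diff (by positivity) zero_le_one

/-- bound for the derivative terms -/
lemma fd_bound {n : ℕ} {x R : ℝ} (hx : 0 < x) (hR : x ≤ R) :
    |Lseq n - (x + n + 1)⁻¹| ≤ (1 + R) * (((n:ℝ) + 1) ^ 2)⁻¹ := by
  have hn1 : (0:ℝ) < (n:ℝ) + 1 := by positivity
  have hxn : (0:ℝ) < x + n + 1 := by positivity
  have hinv_le : (x + (n:ℝ) + 1)⁻¹ ≤ ((n:ℝ)+1)⁻¹ := by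
    apply inv_anti₀ hn1; linarith
  have hinv_ge : ((n:ℝ)+2)⁻¹ - ((n:ℝ)+1)⁻¹ ≥ -(((n:ℝ)+1)^2)⁻¹ := by
    rw [ge_iff_le, neg_le]
    have e : -(((n:ℝ)+2)⁻¹ - ((n:ℝ)+1)⁻¹) = (((n:ℝ)+1)*((n:ℝ)+2))⁻¹ := by
      field_simp
      ring
    rw [e]
    apply inv_anti₀ (by positivity)
    nlinarith
  have hub : Lseq n - (x + n + 1)⁻¹ ≤ R * (((n:ℝ)+1)^2)⁻¹ := by
    have h1 : Lseq n - (x + n + 1)⁻¹ ≤ ((n:ℝ)+1)⁻¹ - (x + n + 1)⁻¹ := by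
      have := Lseq_le n; linarith
    have h2 : ((n:ℝ)+1)⁻¹ - (x + (n:ℝ) + 1)⁻¹ = x * (((n:ℝ)+1) * (x + n + 1))⁻¹ := by
      field_simp
      ring
    have h3 : x * (((n:ℝ)+1) * (x + n + 1))⁻¹ ≤ R * (((n:ℝ)+1)^2)⁻¹ := by
      have hle : (((n:ℝ)+1) * (x + n + 1))⁻¹ ≤ (((n:ℝ)+1)^2)⁻¹ := by
        apply inv_anti₀ (by positivity)
        rw [sq]
        apply mul_le_mul_of_nonneg_left (by linarith) hn1.le
      calc x * (((n:ℝ)+1) * (x + n + 1))⁻¹ ≤ R * (((n:ℝ)+1) * (x + n + 1))⁻¹ := by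
            apply mul_le_mul_of_nonneg_right hR (by positivity)
        _ ≤ R * (((n:ℝ)+1)^2)⁻¹ := by
            apply mul_le_mul_of_nonneg_left hle (by linarith)
      
    linarith
  have hlb : -(((n:ℝ)+1)^2)⁻¹ - 0 ≤ Lseq n - (x + n + 1)⁻¹ := by
    have h1 := le_Lseq n
    have : ((n:ℝ)+2)⁻¹ - ((n:ℝ)+1)⁻¹ ≤ Lseq n - (x + n + 1)⁻¹ := by
      have := hinv_le; linarith
    have := hinv_ge
    linarith
  rw [abs_le]
  constructor
  · have hnn : (0:ℝ) ≤ (((n:ℝ)+1)^2)⁻¹ := by positivity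
    nlinarith
  · have hnn : (0:ℝ) ≤ (((n:ℝ)+1)^2)⁻¹ := by positivity
    nlinarith

/-- bound for the series terms -/
lemma fser_bound {n : ℕ} {x : ℝ} (hx : 0 < x) :
    |fser n x| ≤ (x + x ^ 2) * (((n:ℝ) + 1) ^ 2)⁻¹ := by
  have hn1 : (0:ℝ) < (n:ℝ) + 1 := by positivity
  have hxn : (0:ℝ) < x + n + 1 := by positivity
  have hM : fser n x = x * Lseq n - (Real.log (((n:ℝ)+1) + x) - Real.log ((n:ℝ)+1)) := by
    unfold fser
    have : x + (n:ℝ) + 1 = ((n:ℝ)+1) + x := by ring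
    rw [this]
    ring
  have hMu : Real.log (((n:ℝ)+1) + x) - Real.log ((n:ℝ)+1) ≤ x / ((n:ℝ)+1) :=
    log_diff_le hn1 hx.le
  have hMl : x / (((n:ℝ)+1) + x) ≤ Real.log (((n:ℝ)+1) + x) - Real.log ((n:ℝ)+1) :=
    le_log_diff hn1 hx.le
  rw [hM, abs_le]
  have hL1 := Lseq_le n
  have hL2 := le_Lseq n
  constructor
  · -- lower:  ≥ x/(n+2) - x/(n+1) ≥ -x/(n+1)^2
    have h1 : x * ((n:ℝ)+2)⁻¹ - x / ((n:ℝ)+1) ≤ x * Lseq n - (Real.log (((n:ℝ)+1) + x) - Real.log ((n:ℝ)+1)) := by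
      have := mul_le_mul_of_nonneg_left hL2 hx.le
      linarith
    have h2 : -((x + x^2) * (((n:ℝ)+1)^2)⁻¹) ≤ x * ((n:ℝ)+2)⁻¹ - x / ((n:ℝ)+1) := by
      have e : x * ((n:ℝ)+2)⁻¹ - x / ((n:ℝ)+1) = -(x * (((n:ℝ)+1)*((n:ℝ)+2))⁻¹) := by
        field_simp
        ring
      rw [e, neg_le_neg_iff]
      have hle : ((((n:ℝ)+1)*((n:ℝ)+2))⁻¹) ≤ (((n:ℝ)+1)^2)⁻¹ := by
        apply inv_anti₀ (by positivity)
        nlinarith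
      have hxx : x ≤ x + x^2 := by nlinarith
      calc x * (((n:ℝ)+1)*((n:ℝ)+2))⁻¹ ≤ x * (((n:ℝ)+1)^2)⁻¹ :=
            mul_le_mul_of_nonneg_left hle hx.le
        _ ≤ (x + x^2) * (((n:ℝ)+1)^2)⁻¹ :=
            mul_le_mul_of_nonneg_right hxx (by positivity)
    linarith
  · -- upper: ≤ x/(n+1) - x/(n+1+x) = x^2/((n+1)(n+1+x)) ≤ x^2/(n+1)^2
    have h1 : x * Lseq n - (Real.log (((n:ℝ)+1) + x) - Real.log ((n:ℝ)+1))
        ≤ x * ((n:ℝ)+1)⁻¹ - x / (((n:ℝ)+1) + x) := by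
      have := mul_le_mul_of_nonneg_left hL1 hx.le
      linarith
    have h2 : x * ((n:ℝ)+1)⁻¹ - x / (((n:ℝ)+1) + x) = x^2 * ((((n:ℝ)+1)) * (((n:ℝ)+1) + x))⁻¹ := by
      field_simp
      ring
    have h3 : x^2 * ((((n:ℝ)+1)) * (((n:ℝ)+1) + x))⁻¹ ≤ x^2 * (((n:ℝ)+1)^2)⁻¹ := by
      apply mul_le_mul_of_nonneg_left _ (by positivity)
      apply inv_anti₀ (by positivity)
      nlinarith
    have hxx : x^2 * (((n:ℝ)+1)^2)⁻¹ ≤ (x + x^2) * (((n:ℝ)+1)^2)⁻¹ := by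
      apply mul_le_mul_of_nonneg_right (by nlinarith) (by positivity)
    linarith

lemma summable_sq : Summable (fun n : ℕ => (((n:ℝ) + 1) ^ 2)⁻¹) := by
  have := summable_aux (c := 1) one_pos (le_refl 2)
  exact this.congr fun n => by rw [add_comm]

lemma summable_fser {x : ℝ} (hx : 0 < x) : Summable (fun n => fser n x) := by
  apply Summable.of_abs
  refine Summable.of_nonneg_of_le (fun n => abs_nonneg _) (fun n => fser_bound hx)
    (summable_sq.mul_left _)

lemma summable_fd {x : ℝ} (hx : 0 < x) : Summable (fun n : ℕ => Lseq n - (x + n + 1)⁻¹) := by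
  apply Summable.of_abs
  exact Summable.of_nonneg_of_le (fun n => abs_nonneg _)
    (fun n => fd_bound hx (le_refl x)) (summable_sq.mul_left _)

/-- partial sums of `fser` -/
lemma fser_partial (x : ℝ) (N : ℕ) :
    ∑ n ∈ range N, fser n x
      = x * Real.log ((N:ℝ) + 1) + Real.log (N.factorial : ℝ)
        - ∑ n ∈ range N, Real.log (x + n + 1) := by
  have h1 : ∑ n ∈ range N, Lseq n = Real.log ((N:ℝ) + 1) := by
    have := Finset.sum_range_sub (f := fun i : ℕ => Real.log ((i:ℝ) + 1)) N
    have he : ∀ n : ℕ, Lseq n = Real.log ((↑(n+1):ℝ) + 1) - Real.log ((n:ℝ) + 1) := by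
      intro n; unfold Lseq; push_cast; ring_nf
    rw [Finset.sum_congr rfl (fun n _ => he n), this]
    norm_num
  have h2 : ∑ n ∈ range N, Real.log ((n:ℝ) + 1) = Real.log (N.factorial : ℝ) := by
    rw [← Real.log_prod (s := range N) (f := fun n : ℕ => (n:ℝ) + 1) (fun n _ => by positivity)]
    congr 1
    rw [← Finset.prod_range_add_one_eq_factorial N]
    push_cast
    rfl
  calc ∑ n ∈ range N, fser n x
      = x * (∑ n ∈ range N, Lseq n) + (∑ n ∈ range N, Real.log ((n:ℝ)+1))
        - ∑ n ∈ range N, Real.log (x + n + 1) := by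
        unfold fser
        rw [Finset.mul_sum, ← Finset.sum_add_distrib, ← Finset.sum_sub_distrib]
        refine Finset.sum_congr rfl fun n _ => by ring
    _ = _ := by rw [h1, h2]

/-- log of GammaSeq for `N ≥ 1` -/
lemma log_gammaSeq {x : ℝ} (hx : 0 < x) {N : ℕ} (hN : 1 ≤ N) :
    Real.log (Real.GammaSeq x N)
      = x * Real.log N + Real.log (N.factorial : ℝ) - (Real.log x + ∑ n ∈ range N, Real.log (x + n + 1)) := by
  have hN0 : (0:ℝ) < N := by exact_mod_cast hN
  have hfac : (0:ℝ) < (N.factorial : ℝ) := by exact_mod_cast N.factorial_pos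
  have hprod : (0:ℝ) < ∏ j ∈ range (N+1), (x + j) := by
    apply Finset.prod_pos; intro j _; positivity
  unfold Real.GammaSeq
  rw [Real.log_div (by positivity) (ne_of_gt hprod), Real.log_mul (by positivity) (ne_of_gt hfac),
    Real.log_rpow hN0, Real.log_prod (s := range (N+1)) (f := fun j : ℕ => x + j) (fun j _ => by positivity)]
  have hsplit : ∑ j ∈ range (N+1), Real.log (x + j)
      = Real.log x + ∑ n ∈ range N, Real.log (x + n + 1) := by
    rw [Finset.sum_range_succ' (fun j : ℕ => Real.log (x + j)) N]
    have : ∀ n : ℕ, Real.log (x + ↑(n+1)) = Real.log (x + n + 1) := by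
      intro n; push_cast; ring_nf
    rw [Finset.sum_congr rfl (fun n _ => this n)]
    norm_num
    ring
  rw [hsplit]

/-- convergence of the partial sums to `log Γ x + log x` -/
lemma fser_hasSum {x : ℝ} (hx : 0 < x) :
    HasSum (fun n => fser n x) (Real.log (Real.Gamma x) + Real.log x) := by
  rw [(summable_fser hx).hasSum_iff_tendsto_nat]
  have hG : Tendsto (fun N => Real.log (Real.GammaSeq x N)) atTop
      (𝓝 (Real.log (Real.Gamma x))) := by
    have hΓ : Real.Gamma x ≠ 0 := ne_of_gt (Real.Gamma_pos_of_pos hx)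
    exact (Real.GammaSeq_tendsto_Gamma x).log hΓ
  have heps : Tendsto (fun N : ℕ => x * (Real.log ((N:ℝ)+1) - Real.log N)) atTop (𝓝 0) := by
    have h0 : Tendsto (fun N : ℕ => Real.log ((N:ℝ)+1) - Real.log N) atTop (𝓝 0) := by
      apply squeeze_zero' (g := fun N : ℕ => 1 / (N:ℝ))
      · filter_upwards [eventually_ge_atTop 1] with N hN
        have hN0 : (0:ℝ) < N := by exact_mod_cast hN
        have h := le_log_diff hN0 zero_le_one
        have hp : (0:ℝ) ≤ 1 / ((N:ℝ) + 1) := by positivity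
        linarith
      · filter_upwards [eventually_ge_atTop 1] with N hN
        have hN0 : (0:ℝ) < N := by exact_mod_cast hN
        exact log_diff_le hN0 zero_le_one
      · exact tendsto_one_div_atTop_nhds_zero_nat
    simpa using h0.const_mul x
  have key : Tendsto (fun N : ℕ => Real.log (Real.GammaSeq x N) + Real.log x
      + x * (Real.log ((N:ℝ)+1) - Real.log N)) atTop
      (𝓝 (Real.log (Real.Gamma x) + Real.log x)) := by
    have := (hG.add (tendsto_const_nhds (x := Real.log x))).add heps
    simpa using this
  refine Tendsto.congr' ?_ key
  filter_upwards [eventually_ge_atTop 1] with N hN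
  rw [fser_partial, log_gammaSeq hx hN]
  ring

lemma logGamma_eq {x : ℝ} (hx : 0 < x) :
    Real.log (Real.Gamma x) = -Real.log x + Tser x := by
  have := (fser_hasSum hx).tsum_eq
  unfold Tser
  rw [this]
  ring

lemma hasDerivAt_fser (n : ℕ) {y : ℝ} (hy : 0 < y) :
    HasDerivAt (fser n) (Lseq n - (y + n + 1)⁻¹) y := by
  have h1 : HasDerivAt (fun z : ℝ => z * Lseq n) (Lseq n) y := by
    simpa using (hasDerivAt_id y).mul_const (Lseq n)
  have h2 : HasDerivAt (fun z : ℝ => Real.log (z + n + 1)) ((y + n + 1)⁻¹) y := by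
    have hb : HasDerivAt (fun z : ℝ => z + n + 1) 1 y := by
      have := (hasDerivAt_id y).add_const ((n:ℝ) + 1)
      refine this.congr_of_eventuallyEq (Eventually.of_forall fun z => by simp [id]; ring)
    have := hb.log (by positivity)
    simpa using this
  have := (h1.sub h2).add_const (Real.log ((n:ℝ) + 1))
  unfold fser
  exact this

lemma hasDerivAt_Tser {x : ℝ} (hx : 0 < x) :
    HasDerivAt Tser (Tder x) x := by
  unfold Tser Tder
  refine hasDerivAt_tsum_of_isPreconnected
    (u := fun n : ℕ => (1 + (x+1)) * (((n:ℝ) + 1) ^ 2)⁻¹)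
    (summable_sq.mul_left _) (isOpen_Ioo (a := 0) (b := x + 1)) (isPreconnected_Ioo)
    (fun n y hy => hasDerivAt_fser n hy.1) (fun n y hy => ?_)
    (show x ∈ Ioo 0 (x+1) by constructor <;> linarith) (summable_fser hx)
    (show x ∈ Ioo 0 (x+1) by constructor <;> linarith)
  rw [Real.norm_eq_abs]
  exact fd_bound hy.1 hy.2.le

lemma hasDerivAt_logGamma {x : ℝ} (hx : 0 < x) :
    HasDerivAt (fun y => Real.log (Real.Gamma y)) (-x⁻¹ + Tder x) x := by
  have hev : (fun y => Real.log (Real.Gamma y)) =ᶠ[𝓝 x] (fun y => -Real.log y + Tser y) := by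
    filter_upwards [Ioi_mem_nhds hx] with y hy
    exact logGamma_eq hy
  have hd : HasDerivAt (fun y => -Real.log y + Tser y) (-x⁻¹ + Tder x) x :=
    ((Real.hasDerivAt_log (ne_of_gt hx)).neg).add (hasDerivAt_Tser hx)
  exact hd.congr_of_eventuallyEq hev

lemma psi_eq {x : ℝ} (hx : 0 < x) : psi x = -x⁻¹ + Tder x := by
  unfold psi
  exact (hasDerivAt_logGamma hx).deriv

/-- difference formula for psi -/
lemma psi_sub {a b : ℝ} (ha : 0 < a) (hb : 0 < b) :
    psi b - psi a = ∑' n : ℕ, ((a + n)⁻¹ - (b + n)⁻¹) := by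
  have hsummand : ∀ (u v : ℝ), 0 < u → 0 < v →
      Summable (fun n : ℕ => (u + n)⁻¹ - (v + n)⁻¹) := by
    intro u v hu hv
    set m := min u v with hm
    have hm0 : 0 < m := lt_min hu hv
    apply Summable.of_abs
    refine Summable.of_nonneg_of_le (fun n => abs_nonneg _) (fun n => ?_)
      ((summable_aux hm0 (le_refl 2)).mul_left (|v - u|))
    have hun : (0:ℝ) < u + n := by positivity
    have hvn : (0:ℝ) < v + n := by positivity
    have he : (u + n)⁻¹ - (v + n)⁻¹ = (v - u) * ((u + n) * (v + n))⁻¹ := by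
      field_simp
      ring
    rw [he, abs_mul, abs_of_pos (by positivity : (0:ℝ) < ((u + n) * (v + n))⁻¹)]
    apply mul_le_mul_of_nonneg_left _ (abs_nonneg _)
    apply inv_anti₀ (by positivity)
    rw [sq]
    apply mul_le_mul
    · have : m ≤ u := min_le_left u v
      linarith
    · have : m ≤ v := min_le_right u v
      linarith
    · positivity
    · linarith [hun]
  have hTd : Tder b - Tder a = ∑' n : ℕ, ((a + n + 1)⁻¹ - (b + n + 1)⁻¹) := by
    unfold Tder
    rw [← Summable.tsum_sub (summable_fd hb) (summable_fd ha)]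
    congr 1
    ext n
    ring
  have hshift : Summable (fun n : ℕ => (a + n)⁻¹ - (b + n)⁻¹) := hsummand a b ha hb
  have h0 := Summable.tsum_eq_zero_add hshift
  rw [psi_eq ha, psi_eq hb, h0]
  have he0 : (a + ((0:ℕ):ℝ))⁻¹ - (b + ((0:ℕ):ℝ))⁻¹ = a⁻¹ - b⁻¹ := by norm_num
  have hes : ∀ n : ℕ, (a + ((n+1:ℕ):ℝ))⁻¹ - (b + ((n+1:ℕ):ℝ))⁻¹
      = (a + n + 1)⁻¹ - (b + n + 1)⁻¹ := by
    intro n; push_cast; ring_nf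
  rw [he0, tsum_congr hes, ← hTd]
  ring

noncomputable def Zs (m : ℕ) (x : ℝ) : ℝ := ∑' n : ℕ, ((x + n) ^ m)⁻¹



lemma hasDerivAt_Tder {x : ℝ} (hx : 0 < x) :
    HasDerivAt Tder (∑' n : ℕ, ((x + n + 1) ^ 2)⁻¹) x := by
  have hx2 : 0 < x / 2 := by linarith
  have H := hasDerivAt_tsum_of_isPreconnected
    (g := fun (n : ℕ) (y : ℝ) => Lseq n - (y + n + 1)⁻¹)
    (g' := fun (n : ℕ) (y : ℝ) => ((y + n + 1) ^ 2)⁻¹)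
    (u := fun n : ℕ => ((x/2 + 1 + n) ^ 2)⁻¹)
    (t := Ioo (x/2) (x+1)) (y₀ := x) (y := x)
    (summable_aux (by linarith) (le_refl 2)) isOpen_Ioo isPreconnected_Ioo
    ?_ ?_ (by constructor <;> linarith) (summable_fd hx) (by constructor <;> linarith)
  · exact H
  · intro n y hy
    have hy0 : 0 < y := lt_trans hx2 hy.1
    have hb : HasDerivAt (fun z : ℝ => z + n + 1) 1 y := by
      have := (hasDerivAt_id y).add_const ((n:ℝ) + 1)
      refine this.congr_of_eventuallyEq (Eventually.of_forall fun z => by simp [id]; ring)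
    have hinv := hasDerivAt_inv_pow_aux (le_refl 1) hb (by positivity)
    have h2 := hinv.const_sub (Lseq n)
    simp only [pow_one, mul_one, one_mul, neg_neg] at h2
    convert h2 using 1
    norm_num
  · intro n y hy
    have hy1 : x/2 < y := hy.1
    have hy0 : 0 < y := lt_trans hx2 hy1
    have hyn : (0:ℝ) < y + n + 1 := by positivity
    rw [Real.norm_eq_abs, abs_of_pos (by positivity)]
    apply inv_anti₀ (by positivity)
    apply pow_le_pow_left₀ (by positivity)
    linarith

lemma hasDerivAt_psi {x : ℝ} (hx : 0 < x) :
    HasDerivAt psi (Zs 2 x) x := by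
  have hev : psi =ᶠ[𝓝 x] (fun y => -y⁻¹ + Tder y) := by
    filter_upwards [Ioi_mem_nhds hx] with y hy
    exact psi_eq hy
  have h1 : HasDerivAt (fun y : ℝ => -y⁻¹) ((x^2)⁻¹) x := by
    have := (hasDerivAt_inv (ne_of_gt hx)).neg
    exact this.congr_deriv (neg_neg _)
  have hd := h1.add (hasDerivAt_Tder hx)
  have hZ : (x^2)⁻¹ + ∑' n : ℕ, ((x + n + 1) ^ 2)⁻¹ = Zs 2 x := by
    unfold Zs
    rw [Summable.tsum_eq_zero_add (summable_aux hx (le_refl 2))]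
    have he0 : ((x + ((0:ℕ):ℝ)) ^ 2)⁻¹ = (x^2)⁻¹ := by norm_num
    have hes : ∀ n : ℕ, ((x + ((n+1:ℕ):ℝ)) ^ 2)⁻¹ = ((x + n + 1) ^ 2)⁻¹ := by
      intro n; push_cast; ring_nf
    rw [he0, tsum_congr hes]
  rw [← hZ]
  exact hd.congr_of_eventuallyEq hev

lemma hasDerivAt_Zs {m : ℕ} (hm : 2 ≤ m) {x : ℝ} (hx : 0 < x) :
    HasDerivAt (Zs m) (-((m:ℝ) * Zs (m+1) x)) x := by
  have hx2 : 0 < x / 2 := by linarith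
  have H := hasDerivAt_tsum_of_isPreconnected
    (g := fun (n : ℕ) (y : ℝ) => ((y + n) ^ m)⁻¹)
    (g' := fun (n : ℕ) (y : ℝ) => -((m:ℝ) * 1 * ((y + n) ^ (m+1))⁻¹))
    (u := fun n : ℕ => (m:ℝ) * ((x/2 + n) ^ (m+1))⁻¹)
    (t := Ioo (x/2) (x+1)) (y₀ := x) (y := x)
    ((summable_aux hx2 (by omega)).mul_left _) isOpen_Ioo isPreconnected_Ioo
    ?_ ?_ (by constructor <;> linarith) (summable_aux hx (by omega))
    (by constructor <;> linarith)
  · have he : Zs m = fun z : ℝ => ∑' n : ℕ, ((z + n) ^ m)⁻¹ := rfl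
    rw [he]
    refine H.congr_deriv ?_
    unfold Zs
    rw [show -((m:ℝ) * ∑' n : ℕ, ((x + n) ^ (m+1))⁻¹) = ∑' n : ℕ, -((m:ℝ) * ((x+n)^(m+1))⁻¹) by
      rw [tsum_neg, ← tsum_mul_left]]
    exact tsum_congr fun n => by ring
  · intro n y hy
    have hy0 : 0 < y + n := by
      have h1 : 0 < y := lt_trans hx2 hy.1
      positivity
    have hb : HasDerivAt (fun z : ℝ => z + n) 1 y := (hasDerivAt_id y).add_const _
    exact hasDerivAt_inv_pow_aux (by omega) hb (by simpa using hy0)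
  · intro n y hy
    have hy1 : x/2 < y := hy.1
    have hy0 : 0 < y := lt_trans hx2 hy1
    have hyn : (0:ℝ) < y + n := by positivity
    rw [Real.norm_eq_abs, mul_one, abs_neg, abs_mul,
      abs_of_nonneg (by positivity : (0:ℝ) ≤ (m:ℝ)),
      abs_of_pos (by positivity : (0:ℝ) < ((y + n) ^ (m+1))⁻¹)]
    apply mul_le_mul_of_nonneg_left _ (by positivity)
    apply inv_anti₀ (by positivity)
    apply pow_le_pow_left₀ (by positivity)
    linarith

lemma iteratedDeriv_psi : ∀ j : ℕ, 1 ≤ j → ∀ x : ℝ, 0 < x →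
    iteratedDeriv j psi x = (-1:ℝ)^(j+1) * (j.factorial : ℝ) * Zs (j+1) x := by
  intro j
  induction j with
  | zero => intro h; omega
  | succ j ih =>
    intro _ x hx
    by_cases hj : 1 ≤ j
    · -- step case, j ≥ 1
      rw [iteratedDeriv_succ]
      have hev : iteratedDeriv j psi =ᶠ[𝓝 x]
          (fun y => (-1:ℝ)^(j+1) * (j.factorial : ℝ) * Zs (j+1) y) := by
        filter_upwards [Ioi_mem_nhds hx] with y hy
        exact ih hj y hy
      have hd : HasDerivAt (fun y => (-1:ℝ)^(j+1) * (j.factorial : ℝ) * Zs (j+1) y)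
          ((-1:ℝ)^(j+1) * (j.factorial : ℝ) * -((((j:ℝ)+1)) * Zs (j+2) x)) x := by
        have := (hasDerivAt_Zs (m := j+1) (by omega) hx).const_mul
          ((-1:ℝ)^(j+1) * (j.factorial : ℝ))
        refine this.congr_deriv ?_
        push_cast
        ring
      have := (hd.congr_of_eventuallyEq hev).deriv
      rw [this]
      rw [show j + 1 + 1 = j + 2 from rfl]
      rw [Nat.factorial_succ]
      push_cast
      rw [pow_succ]
      ring
    · -- base case j = 0, so we prove for j+1 = 1
      have hj0 : j = 0 := by omega
      subst hj0
      rw [iteratedDeriv_one]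
      rw [(hasDerivAt_psi hx).deriv]
      norm_num

lemma ident {a b : ℝ} (ha : 0 < a) (hb : 0 < b) {k : ℕ} (hk : 1 ≤ k) :
    (-1:ℝ)^(k-1) * (iteratedDeriv (k-1) psi b - iteratedDeriv (k-1) psi a)
      = ((k-1).factorial : ℝ) * ∑' n : ℕ, (((a + n) ^ k)⁻¹ - ((b + n) ^ k)⁻¹) := by
  match k, hk with
  | 1, _ =>
    simp only [Nat.sub_self, iteratedDeriv_zero, pow_zero, one_mul, Nat.factorial_zero,
      Nat.cast_one]
    rw [psi_sub ha hb]
    exact tsum_congr fun n => by rw [pow_one, pow_one]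
  | (j+2), _ =>
    have hj1 : 1 ≤ j + 1 := by omega
    have e : j + 2 - 1 = j + 1 := rfl
    rw [e]
    rw [iteratedDeriv_psi (j+1) hj1 b hb, iteratedDeriv_psi (j+1) hj1 a ha]
    have hsgn : (-1:ℝ)^(j+1) * (-1:ℝ)^(j+1+1) = -1 := by
      rw [← pow_add]
      exact Odd.neg_one_pow ⟨j+1, by ring⟩
    have hsum : Zs (j+2) a - Zs (j+2) b
        = ∑' n : ℕ, (((a + n) ^ (j+2))⁻¹ - ((b + n) ^ (j+2))⁻¹) := by
      unfold Zs
      rw [← Summable.tsum_sub (summable_aux ha (by omega)) (summable_aux hb (by omega))]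
    have e2 : j + 1 + 1 = j + 2 := rfl
    rw [e2] at *
    calc (-1:ℝ)^(j+1) * ((-1:ℝ)^(j+2) * ((j+1).factorial : ℝ) * Zs (j+2) b
          - (-1:ℝ)^(j+2) * ((j+1).factorial : ℝ) * Zs (j+2) a)
        = ((-1:ℝ)^(j+1) * (-1:ℝ)^(j+2)) * ((j+1).factorial : ℝ) * (Zs (j+2) b - Zs (j+2) a) := by
          ring
      _ = ((j+1).factorial : ℝ) * (Zs (j+2) a - Zs (j+2) b) := by
          rw [show (j:ℕ)+1+1 = j+2 from rfl] at hsgn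
          rw [hsgn]; ring
      _ = _ := by rw [hsum]



theorem polygamma_divided_difference_bounds (a b : ℝ) (ha : 0 < a) (hb : 0 < b)
    (hab : a ≠ b) (h1 : |b - a| < 1) (k : ℕ) (hk : 1 ≤ k) :
    ((k - 1).factorial / 2 : ℝ) *
        ((1 / (b - a) + 1) / a ^ k + (1 - 1 / (b - a)) / b ^ k) <
      (-1 : ℝ) ^ (k - 1) *
        (iteratedDeriv (k - 1) psi b - iteratedDeriv (k - 1) psi a) / (b - a) ∧
    (-1 : ℝ) ^ (k - 1) *
        (iteratedDeriv (k - 1) psi b - iteratedDeriv (k - 1) psi a) / (b - a) <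
      ((k - 1).factorial / 2 : ℝ) *
        ((1 / (b - a) + 1 / |b - a|) / a ^ k + (1 / |b - a| - 1 / (b - a)) / b ^ k) := by
  have hc : (0:ℝ) < ((k-1).factorial : ℝ) := by exact_mod_cast (k-1).factorial_pos
  set c : ℝ := ((k-1).factorial : ℝ) with hcdef
  have hak : (a:ℝ) ^ k ≠ 0 := by positivity
  have hbk : (b:ℝ) ^ k ≠ 0 := by positivity
  rcases hab.lt_or_gt with hlt | hgt
  · -- a < b
    have ht : 0 < b - a := sub_pos.mpr hlt
    have habs : |b - a| = b - a := abs_of_pos ht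
    have h1' : b - a < 1 := by rw [habs] at h1; exact h1
    obtain ⟨hlow, hup⟩ := sum_bounds ha hlt h1' hk
    have hid := ident ha hb hk
    rw [habs]
    set S := ∑' n : ℕ, (((a + n) ^ k)⁻¹ - ((b + n) ^ k)⁻¹) with hS
    have hmid : (-1:ℝ) ^ (k-1) * (iteratedDeriv (k-1) psi b - iteratedDeriv (k-1) psi a) / (b-a)
        = (c / (b-a)) * S := by
      rw [hid]; ring
    rw [hmid]
    have hpos : 0 < c / (b - a) := div_pos hc ht
    constructor
    · have hEq : (c / 2) * ((1/(b-a) + 1)/a^k + (1 - 1/(b-a))/b^k)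
          = (c/(b-a)) * (((1 + (b-a)) * (a^k)⁻¹ + ((b-a) - 1) * (b^k)⁻¹)/2) := by
        field_simp
      rw [hEq]
      exact mul_lt_mul_of_pos_left hlow hpos
    · have hEq : (c / 2) * ((1/(b-a) + 1/(b-a))/a^k + (1/(b-a) - 1/(b-a))/b^k)
          = (c/(b-a)) * (a^k)⁻¹ := by
        field_simp
        ring
      rw [hEq]
      exact mul_lt_mul_of_pos_left hup hpos
  · -- b < a
    have ht : 0 < a - b := sub_pos.mpr hgt
    have hba : b - a ≠ 0 := sub_ne_zero.mpr (ne_of_lt hgt)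
    have habs : |b - a| = a - b := by rw [abs_sub_comm]; exact abs_of_pos ht
    have h1' : a - b < 1 := by rw [habs] at h1; exact h1
    obtain ⟨hlow, hup⟩ := sum_bounds hb hgt h1' hk
    have hid := ident hb ha hk
    rw [habs]
    set S := ∑' n : ℕ, (((b + n) ^ k)⁻¹ - ((a + n) ^ k)⁻¹) with hS
    have hmid : (-1:ℝ) ^ (k-1) * (iteratedDeriv (k-1) psi b - iteratedDeriv (k-1) psi a) / (b-a)
        = (c / (a-b)) * S := by
      rw [show iteratedDeriv (k-1) psi b - iteratedDeriv (k-1) psi a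
          = -(iteratedDeriv (k-1) psi a - iteratedDeriv (k-1) psi b) by ring, mul_neg, hid,
        show b - a = -(a-b) by ring, neg_div_neg_eq]
      ring
    rw [hmid]
    have hpos : 0 < c / (a - b) := div_pos hc ht
    constructor
    · have hEq : (c / 2) * ((1/(b-a) + 1)/a^k + (1 - 1/(b-a))/b^k)
          = (c/(a-b)) * (((1 + (a-b)) * (b^k)⁻¹ + ((a-b) - 1) * (a^k)⁻¹)/2) := by
        field_simp
        ring
      rw [hEq]
      exact mul_lt_mul_of_pos_left hlow hpos
    · have hEq : (c / 2) * ((1/(b-a) + 1/(a-b))/a^k + (1/(a-b) - 1/(b-a))/b^k)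
          = (c/(a-b)) * (b^k)⁻¹ := by
        field_simp
        ring
      rw [hEq]
      exact mul_lt_mul_of_pos_left hup hpos
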